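/- Let α ∈ ℂ, α ≠ 0, and let Ω ⊆ ℂ be a nonempty connected open set such that qΩ ⊆ Ω. Let y be holomorphic on Ω and satisfy y′(x) = α·y(qx) − y(x) for all x ∈ Ω. If there exists R > 0 such that sup{|y(x)| : x ∈ Ω, |x| < R} < ∞, then there exists an entire function Y : ℂ → ℂ with Y(x) = y(x) for all x ∈ Ω. -/

import Mathlib

open Finset Filter Metric Set Topology

lemma norm_sub_left_le_of_mem_segment {a b z : ℂ} (h : z ∈ segment ℝ a b) :
    ‖z - a‖ ≤ ‖b - a‖ := by
  obtain ⟨s, t, hs, ht, hst, rfl⟩ := h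
  have he : s • a + t • b - a = t • (b - a) := by
    have hs1 : s = 1 - t := by linarith
    subst hs1
    module
  rw [he, norm_smul, Real.norm_of_nonneg ht]
  have : t ≤ 1 := by linarith
  nlinarith [norm_nonneg (b - a)]


lemma seg_est {Ω : Set ℂ} {f f' : ℂ → ℂ}
    (hf : ∀ w ∈ Ω, HasDerivAt f (f' w) w)
    {cc : ℂ} {s : Set ℂ} (hs : Convex ℝ s) (hmem : ∀ z ∈ s, cc * z ∈ Ω)
    {B : ℝ} (hB : ∀ z ∈ s, ‖f' (cc * z)‖ ≤ B)
    {z z' : ℂ} (hz : z ∈ s) (hz' : z' ∈ s) :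
    ‖f (cc * z) - f (cc * z')‖ ≤ ‖cc‖ * B * ‖z - z'‖ := by
  have hd : ∀ w ∈ s, HasDerivWithinAt (fun t => f (cc * t)) (f' (cc * w) * cc) s w := by
    intro w hw
    have h1 : HasDerivAt (fun t : ℂ => cc * t) cc w := by
      simpa using (hasDerivAt_id w).const_mul cc
    exact (HasDerivAt.comp w (hf _ (hmem w hw)) h1).hasDerivWithinAt
  have h2 : ∀ w ∈ s, ‖f' (cc * w) * cc‖ ≤ B * ‖cc‖ := by
    intro w hw
    rw [norm_mul]
    exact mul_le_mul_of_nonneg_right (hB w hw) (norm_nonneg _)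
  have h3 := hs.norm_image_sub_le_of_norm_hasDerivWithin_le hd h2 hz' hz
  calc ‖f (cc * z) - f (cc * z')‖ ≤ (B * ‖cc‖) * ‖z - z'‖ := h3
    _ = ‖cc‖ * B * ‖z - z'‖ := by ring

lemma chain_est {Ω : Set ℂ} {f f' : ℂ → ℂ}
    (hf : ∀ w ∈ Ω, HasDerivAt f (f' w) w)
    {m : ℕ} {p : ℕ → ℂ} (hpseg : ∀ i < m, segment ℝ (p i) (p (i+1)) ⊆ Ω)
    {cc : ℂ} (hcc : ∀ z ∈ Ω, cc * z ∈ Ω)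
    {B : ℝ}
    (hB : ∀ i < m, ∀ z ∈ segment ℝ (p i) (p (i+1)), ‖f' (cc * z)‖ ≤ B) :
    ∀ j ≤ m, ‖f (cc * p j) - f (cc * p 0)‖
      ≤ ‖cc‖ * B * (∑ i ∈ Finset.range j, ‖p (i+1) - p i‖) := by
  intro j hj
  induction j with
  | zero => simp
  | succ j ih =>
    have hj' : j ≤ m := by omega
    have hjm : j < m := by omega
    have h1 := ih hj'
    have h2 : ‖f (cc * p (j+1)) - f (cc * p j)‖ ≤ ‖cc‖ * B * ‖p (j+1) - p j‖ := by
      have := seg_est hf (convex_segment (p j) (p (j+1)))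
        (fun z hz => hcc z (hpseg j hjm hz))
        (fun z hz => hB j hjm z hz)
        (right_mem_segment ℝ (p j) (p (j+1))) (left_mem_segment ℝ (p j) (p (j+1)))
      exact this
    have h3 := dist_triangle (f (cc * p (j+1))) (f (cc * p j)) (f (cc * p 0))
    rw [dist_eq_norm, dist_eq_norm, dist_eq_norm] at h3
    calc ‖f (cc * p (j+1)) - f (cc * p 0)‖
        ≤ ‖f (cc * p (j+1)) - f (cc * p j)‖ + ‖f (cc * p j) - f (cc * p 0)‖ := h3
      _ ≤ ‖cc‖ * B * ‖p (j+1) - p j‖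
          + ‖cc‖ * B * (∑ i ∈ Finset.range j, ‖p (i+1) - p i‖) := add_le_add h2 h1
      _ = ‖cc‖ * B * (∑ i ∈ Finset.range (j+1), ‖p (i+1) - p i‖) := by
          rw [Finset.sum_range_succ]; ring


lemma pantograph_exists_entire (q : ℝ) (hq0 : 0 < q) (hq1 : q < 1) (α : ℂ) :
    ∃ E : ℂ → ℂ, Differentiable ℂ E ∧ E 0 = 1 ∧
      ∀ x : ℂ, HasDerivAt E (α * E ((q:ℂ) * x) - E x) x := by
  set a : ℕ → ℂ := fun n => (∏ k ∈ range n, (α * (q:ℂ)^k - 1)) / (n.factorial : ℂ) with ha_def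
  have ha0 : a 0 = 1 := by simp [ha_def]
  have harec : ∀ n : ℕ, ((n:ℂ)+1) * a (n+1) = (α*(q:ℂ)^n - 1) * a n := by
    intro n
    have hfac : ((n+1).factorial : ℂ) = ((n:ℂ)+1) * (n.factorial : ℂ) := by
      rw [Nat.factorial_succ]; push_cast; ring
    have h1 : (n.factorial : ℂ) ≠ 0 := Nat.cast_ne_zero.mpr n.factorial_ne_zero
    have h2 : ((n:ℂ)+1) ≠ 0 := Nat.cast_add_one_ne_zero n
    simp only [ha_def, prod_range_succ, hfac]
    field_simp
  have habd : ∀ n : ℕ, ‖a n‖ ≤ (‖α‖+1)^n / (n.factorial : ℝ) := by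
    intro n
    have h1 : ‖∏ k ∈ range n, (α * (q:ℂ)^k - 1)‖ ≤ (‖α‖+1)^n := by
      calc ‖∏ k ∈ range n, (α * (q:ℂ)^k - 1)‖ = ∏ k ∈ range n, ‖α * (q:ℂ)^k - 1‖ := by
            exact norm_prod _ _
        _ ≤ ∏ _k ∈ range n, (‖α‖+1) := by
            apply Finset.prod_le_prod (fun _ _ => norm_nonneg _)
            intro k _
            calc ‖α * (q:ℂ)^k - 1‖ ≤ ‖α * (q:ℂ)^k‖ + ‖(1:ℂ)‖ := norm_sub_le _ _
              _ = ‖α‖ * q^k + 1 := by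
                  rw [norm_mul, norm_pow, Complex.norm_real, Real.norm_of_nonneg hq0.le,
                    norm_one]
              _ ≤ ‖α‖ * 1 + 1 := by
                  have := pow_le_one₀ hq0.le hq1.le (n := k)
                  nlinarith [norm_nonneg α]
              _ = ‖α‖ + 1 := by ring
        _ = (‖α‖+1)^n := by rw [prod_const, card_range]
    have h2 : (0:ℝ) < (n.factorial : ℝ) := by exact_mod_cast n.factorial_pos
    calc ‖a n‖ = ‖∏ k ∈ range n, (α * (q:ℂ)^k - 1)‖ / (n.factorial : ℝ) := by
          rw [ha_def]; rw [norm_div]; norm_num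
      _ ≤ (‖α‖+1)^n / (n.factorial : ℝ) := by
          exact div_le_div_of_nonneg_right h1 h2.le
  -- summability bounds
  have hbound : ∀ (ρ : ℝ) (z : ℂ), ‖z‖ ≤ ρ → ∀ n : ℕ,
      ‖a n * z^n‖ ≤ ((‖α‖+1)*ρ)^n / (n.factorial : ℝ) := by
    intro ρ z hz n
    have h0ρ : (0:ℝ) ≤ ρ := le_trans (norm_nonneg z) hz
    have h2 : (0:ℝ) < (n.factorial : ℝ) := by exact_mod_cast n.factorial_pos
    calc ‖a n * z^n‖ = ‖a n‖ * ‖z‖^n := by rw [norm_mul, norm_pow]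
      _ ≤ ((‖α‖+1)^n / (n.factorial : ℝ)) * ρ^n := by
          apply mul_le_mul (habd n) (pow_le_pow_left₀ (norm_nonneg z) hz n)
            (pow_nonneg (norm_nonneg z) n)
            (div_nonneg (pow_nonneg (by positivity) n) h2.le)
      _ = ((‖α‖+1)*ρ)^n / (n.factorial : ℝ) := by rw [mul_pow]; ring
  have hsummE : ∀ z : ℂ, Summable (fun n => a n * z^n) := by
    intro z
    apply Summable.of_norm
    apply Summable.of_nonneg_of_le (fun n => norm_nonneg _) (hbound ‖z‖ z le_rfl)
    exact Real.summable_pow_div_factorial _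
  set g : ℕ → ℂ → ℂ := fun n z => (((n:ℂ)+1) * a (n+1)) * z^n with hg_def
  have hgbound : ∀ (ρ : ℝ) (z : ℂ), ‖z‖ ≤ ρ → ∀ n : ℕ,
      ‖g n z‖ ≤ (‖α‖+1) * (((‖α‖+1)*ρ)^n / (n.factorial : ℝ)) := by
    intro ρ z hz n
    have h0ρ : (0:ℝ) ≤ ρ := le_trans (norm_nonneg z) hz
    have h2 : (0:ℝ) < (n.factorial : ℝ) := by exact_mod_cast n.factorial_pos
    have h3 : (0:ℝ) < ((n+1).factorial : ℝ) := by exact_mod_cast (n+1).factorial_pos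
    have hnc : ‖((n:ℂ)+1)‖ = (n:ℝ)+1 := by
      rw [show ((n:ℂ)+1) = ((n+1 : ℕ) : ℂ) by push_cast; ring]
      rw [Complex.norm_natCast]; push_cast; ring
    calc ‖g n z‖ = ‖((n:ℂ)+1)‖ * ‖a (n+1)‖ * ‖z‖^n := by
          rw [hg_def]; simp [norm_mul, norm_pow]
      _ ≤ ((n:ℝ)+1) * ((‖α‖+1)^(n+1) / ((n+1).factorial : ℝ)) * ρ^n := by
          rw [hnc]
          apply mul_le_mul (mul_le_mul le_rfl (habd (n+1)) (norm_nonneg _) (by positivity))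
            (pow_le_pow_left₀ (norm_nonneg z) hz n) (pow_nonneg (norm_nonneg z) n)
            (by positivity)
      _ = (‖α‖+1) * (((‖α‖+1)*ρ)^n / (n.factorial : ℝ)) := by
          rw [Nat.factorial_succ]
          push_cast
          rw [mul_pow, pow_succ]
          field_simp
  have hsummG : ∀ z : ℂ, Summable (fun n => g n z) := by
    intro z
    apply Summable.of_norm
    apply Summable.of_nonneg_of_le (fun n => norm_nonneg _) (hgbound ‖z‖ z le_rfl)
    exact ((Real.summable_pow_div_factorial _).mul_left _)
  set E : ℂ → ℂ := fun z => ∑' n, a n * z^n with hE_def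
  set G : ℂ → ℂ := fun z => ∑' n, g n z with hG_def
  have hE0 : E 0 = 1 := by
    rw [hE_def]
    simp only
    rw [tsum_eq_single 0 (by intro n hn; simp [zero_pow hn])]
    simp [ha0]
  have hasderiv : ∀ x : ℂ, HasDerivAt E (G x) x := by
    intro x
    have hx : x ∈ ball (0:ℂ) (‖x‖+1) := by
      simp [mem_ball, dist_eq_norm]
    have hF' : TendstoUniformlyOn (fun N z => ∑ n ∈ range N, g n z) G atTop
        (ball (0:ℂ) (‖x‖+1)) := by
      apply tendstoUniformlyOn_tsum_nat
        (u := fun n => (‖α‖+1) * (((‖α‖+1)*(‖x‖+1))^n / (n.factorial : ℝ)))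
        (((Real.summable_pow_div_factorial _).mul_left _))
      intro n z hz
      apply hgbound _ z _ n
      rw [mem_ball, dist_eq_norm, sub_zero] at hz
      exact hz.le
    have hF : ∀ N : ℕ, ∀ z ∈ ball (0:ℂ) (‖x‖+1),
        HasDerivAt (fun w => ∑ n ∈ range (N+1), a n * w^n) (∑ n ∈ range N, g n z) z := by
      intro N z hz
      have h1 : HasDerivAt (fun w => ∑ n ∈ range (N+1), a n * w^n)
          (∑ n ∈ range (N+1), a n * ((n:ℂ) * z^(n-1))) z := by
        apply HasDerivAt.fun_sum
        intro n _
        exact (hasDerivAt_pow n z).const_mul (a n)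
      convert h1 using 1
      rw [Finset.sum_range_succ']
      simp only [Nat.cast_zero, zero_mul, mul_zero, add_zero]
      apply Finset.sum_congr rfl
      intro i _
      simp only [hg_def, Nat.add_sub_cancel]
      push_cast
      ring
    have hfg : ∀ z ∈ ball (0:ℂ) (‖x‖+1),
        Tendsto (fun N : ℕ => ∑ n ∈ range (N+1), a n * z^n) atTop (𝓝 (E z)) := by
      intro z _
      have h1 := (hsummE z).hasSum.tendsto_sum_nat
      exact h1.comp (tendsto_add_atTop_nat 1)
    exact hasDerivAt_of_tendstoUniformlyOn isOpen_ball hF'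
      (Filter.Eventually.of_forall hF) hfg hx
  have hfeq : ∀ x : ℂ, α * E ((q:ℂ) * x) - E x = G x := by
    intro x
    have h1 : α * E ((q:ℂ) * x) = ∑' n, α * (a n * ((q:ℂ)*x)^n) := by
      rw [hE_def]; exact (tsum_mul_left).symm
    have h2 : α * E ((q:ℂ) * x) - E x
        = ∑' n, (α * (a n * ((q:ℂ)*x)^n) - a n * x^n) := by
      rw [h1, hE_def]
      exact (Summable.tsum_sub ((hsummE _).mul_left α) (hsummE x)).symm
    rw [h2, hG_def]
    apply tsum_congr
    intro n
    have hr := harec n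
    simp only [hg_def]
    rw [mul_pow]
    linear_combination (-(x^n)) * hr
  refine ⟨E, fun x => (hasderiv x).differentiableAt, hE0, fun x => ?_⟩
  rw [hfeq x]
  exact hasderiv x


lemma chain_connect {Ω : Set ℂ} (hopen : IsOpen Ω) (hconn : IsPreconnected Ω)
    {x y : ℂ} (hx : x ∈ Ω) (hy : y ∈ Ω) :
    ∃ (m : ℕ) (p : ℕ → ℂ), p 0 = x ∧ p m = y ∧
      ∀ i < m, segment ℝ (p i) (p (i+1)) ⊆ Ω := by
  set Chain : ℂ → Prop := fun z => ∃ (m : ℕ) (p : ℕ → ℂ), p 0 = x ∧ p m = z ∧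
      ∀ i < m, segment ℝ (p i) (p (i+1)) ⊆ Ω with hChain_def
  have hext : ∀ z w : ℂ, Chain z → segment ℝ z w ⊆ Ω → Chain w := by
    rintro z w ⟨m, p, h0, hm, hseg⟩ hzw
    refine ⟨m+1, fun i => if i ≤ m then p i else w, by simp [h0], by simp, ?_⟩
    intro i hi
    rcases Nat.lt_succ_iff_lt_or_eq.mp hi with h | h
    · have h1 : i ≤ m := h.le
      have h2 : i + 1 ≤ m := h
      simp only [if_pos h1, if_pos h2]
      exact hseg i h
    · subst h
      simp only [le_refl, if_pos, Nat.lt_irrefl, if_neg (Nat.not_succ_le_self i), hm]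
      exact hzw
  set U : Set ℂ := {z | ∃ ε > 0, ball z ε ⊆ Ω ∧ Chain z} with hU_def
  set V : Set ℂ := {z | ∃ ε > 0, ball z ε ⊆ Ω ∧ ¬ Chain z} with hV_def
  have hUopen : IsOpen U := by
    rw [Metric.isOpen_iff]
    rintro z ⟨ε, hε, hball, hch⟩
    refine ⟨ε, hε, ?_⟩
    intro w hw
    refine ⟨ε - dist w z, by simp [mem_ball] at hw; linarith, ?_, ?_⟩
    · exact (ball_subset_ball' (by linarith [dist_nonneg (x := w) (y := z)])).trans hball
    · exact hext z w hch (((convex_ball z ε).segment_subset (mem_ball_self hε) hw).trans hball)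
  have hVopen : IsOpen V := by
    rw [Metric.isOpen_iff]
    rintro z ⟨ε, hε, hball, hch⟩
    refine ⟨ε, hε, ?_⟩
    intro w hw
    refine ⟨ε - dist w z, by simp [mem_ball] at hw; linarith, ?_, ?_⟩
    · exact (ball_subset_ball' (by linarith [dist_nonneg (x := w) (y := z)])).trans hball
    · intro hchw
      exact hch (hext w z hchw
        (((convex_ball z ε).segment_subset hw (mem_ball_self hε)).trans hball))
  have hcover : Ω ⊆ U ∪ V := by
    intro z hz
    obtain ⟨ε, hε, hball⟩ := (Metric.isOpen_iff).mp hopen z hz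
    by_cases h : Chain z
    · exact Or.inl ⟨ε, hε, hball, h⟩
    · exact Or.inr ⟨ε, hε, hball, h⟩
  by_cases hcy : Chain y
  · exact hcy
  · obtain ⟨εx, hεx, hbx⟩ := (Metric.isOpen_iff).mp hopen x hx
    obtain ⟨εy, hεy, hby⟩ := (Metric.isOpen_iff).mp hopen y hy
    have hxin : x ∈ Ω ∩ U := ⟨hx, εx, hεx, hbx, ⟨0, fun _ => x, rfl, rfl, by omega⟩⟩
    have hyin : y ∈ Ω ∩ V := ⟨hy, εy, hεy, hby, hcy⟩
    obtain ⟨w, _, ⟨_, _, _, hcw⟩, ⟨_, _, _, hncw⟩⟩ :=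
      hconn U V hUopen hVopen hcover ⟨x, hxin⟩ ⟨y, hyin⟩
    exact absurd hcw hncw

set_option maxHeartbeats 1000000 in
/-- A bounded-near-zero holomorphic solution of `y'(x) = α y(qx) - y(x)` on a
nonempty connected open set `Ω` with `qΩ ⊆ Ω` extends to an entire function. -/
theorem stmt0 (q : ℝ) (hq0 : 0 < q) (hq1 : q < 1)
    (α : ℂ) (hα : α ≠ 0)
    (Ω : Set ℂ) (hΩne : Ω.Nonempty) (hΩconn : IsConnected Ω) (hΩopen : IsOpen Ω)
    (hqΩ : ∀ x ∈ Ω, (q : ℂ) * x ∈ Ω)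
    (y : ℂ → ℂ)
    (hy : ∀ x ∈ Ω, HasDerivAt y (α * y ((q : ℂ) * x) - y x) x)
    (R : ℝ) (hR : 0 < R)
    (hbdd : ∃ C : ℝ, ∀ x ∈ Ω, ‖x‖ < R → ‖y x‖ ≤ C) :
    ∃ Y : ℂ → ℂ, Differentiable ℂ Y ∧ ∀ x ∈ Ω, Y x = y x := by
  classical
  obtain ⟨E, hEdiff, hE0, hE⟩ := pantograph_exists_entire q hq0 hq1 α
  obtain ⟨x0, hx0⟩ := hΩne
  obtain ⟨C, hC⟩ := hbdd
  have hC' : ∀ x ∈ Ω, ‖x‖ < R → ‖y x‖ ≤ C := by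
    intro x hx hxR
    exact hC x hx hxR
  have hQnorm : ∀ n : ℕ, ‖((q:ℂ))^n‖ = q^n := by
    intro n; rw [norm_pow, Complex.norm_real, Real.norm_of_nonneg hq0.le]
  have hQΩ : ∀ (n : ℕ), ∀ z ∈ Ω, ((q:ℂ))^n * z ∈ Ω := by
    intro n
    induction n with
    | zero => intro z hz; simpa using hz
    | succ n ih =>
      intro z hz
      have h1 := ih ((q:ℂ)*z) (hqΩ z hz)
      rw [pow_succ, mul_assoc]
      exact h1
  -- chain from x0 to q x0
  obtain ⟨m, p, hp0, hpm, hpseg⟩ :=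
    chain_connect hΩopen hΩconn.isPreconnected hx0 (hqΩ x0 hx0)
  -- small closed ball around x0
  obtain ⟨r2, hr2, hball2⟩ := Metric.isOpen_iff.mp hΩopen x0 hx0
  set r : ℝ := r2 / 2 with hr_def
  have hr : 0 < r := by positivity
  have hballΩ : closedBall x0 r ⊆ Ω :=
    (closedBall_subset_ball (by rw [hr_def]; linarith)).trans hball2
  set L : ℝ := ∑ i ∈ Finset.range m, ‖p (i+1) - p i‖ with hL_def
  have hL0 : 0 ≤ L := Finset.sum_nonneg fun i _ => norm_nonneg _
  set K : Set ℂ := closedBall x0 r ∪ ⋃ i ∈ Finset.range m, segment ℝ (p i) (p (i+1))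
    with hK_def
  have hsegK : ∀ i < m, segment ℝ (p i) (p (i+1)) ⊆ K := by
    intro i hi z hz
    exact Or.inr (Set.mem_iUnion₂.mpr ⟨i, Finset.mem_range.mpr hi, hz⟩)
  have hballK : closedBall x0 r ⊆ K := Set.subset_union_left
  have hKΩ : K ⊆ Ω := by
    intro z hz
    rcases hz with hz | hz
    · exact hballΩ hz
    · obtain ⟨i, hi, hzi⟩ := Set.mem_iUnion₂.mp hz
      exact hpseg i (Finset.mem_range.mp hi) hzi
  have hx0K : x0 ∈ K := hballK (mem_closedBall_self hr.le)
  have hsum_le : ∀ j ≤ m, (∑ i ∈ Finset.range j, ‖p (i+1) - p i‖) ≤ L := by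
    intro j hj
    rw [hL_def]
    exact Finset.sum_le_sum_of_subset_of_nonneg
      (Finset.range_subset_range.mpr hj) (fun i _ _ => norm_nonneg _)
  have hchain_norm : ∀ j ≤ m, ‖p j - x0‖ ≤ ∑ i ∈ Finset.range j, ‖p (i+1) - p i‖ := by
    intro j hj
    induction j with
    | zero => simp [hp0]
    | succ j ih =>
      have h2 := ih (by omega)
      have h3 := dist_triangle (p (j+1)) (p j) x0
      rw [dist_eq_norm, dist_eq_norm, dist_eq_norm] at h3
      rw [Finset.sum_range_succ]
      calc ‖p (j+1) - x0‖ ≤ ‖p (j+1) - p j‖ + ‖p j - x0‖ := h3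
        _ ≤ (∑ i ∈ Finset.range j, ‖p (i+1) - p i‖) + ‖p (j+1) - p j‖ := by linarith
        _ = ∑ i ∈ Finset.range j, ‖p (i+1) - p i‖ + ‖p (j+1) - p j‖ := by ring
  set ρ : ℝ := ‖x0‖ + (r + L) with hρ_def
  have hρ0 : 0 < ρ := by
    have := norm_nonneg x0
    rw [hρ_def]; linarith
  have hKnorm : ∀ z ∈ K, ‖z‖ ≤ ρ := by
    intro z hz
    rcases hz with hz | hz
    · have h1 := mem_closedBall_iff_norm.mp hz
      calc ‖z‖ = ‖x0 + (z - x0)‖ := by ring_nf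
        _ ≤ ‖x0‖ + ‖z - x0‖ := norm_add_le _ _
        _ ≤ ρ := by rw [hρ_def]; linarith
    · obtain ⟨i, hi, hzi⟩ := Set.mem_iUnion₂.mp hz
      have him : i < m := Finset.mem_range.mp hi
      have h4 : ‖z - p i‖ ≤ ‖p (i+1) - p i‖ := norm_sub_left_le_of_mem_segment hzi
      have h5 := hchain_norm i him.le
      have h6 : (∑ k ∈ Finset.range i, ‖p (k+1) - p k‖) + ‖p (i+1) - p i‖ ≤ L := by
        have := hsum_le (i+1) (by omega)
        rw [Finset.sum_range_succ] at this
        linarith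
      have h7 := dist_triangle z (p i) x0
      rw [dist_eq_norm, dist_eq_norm, dist_eq_norm] at h7
      calc ‖z‖ = ‖x0 + (z - x0)‖ := by ring_nf
        _ ≤ ‖x0‖ + ‖z - x0‖ := norm_add_le _ _
        _ ≤ ‖x0‖ + (‖z - p i‖ + ‖p i - x0‖) := by linarith
        _ ≤ ‖x0‖ + L := by linarith
        _ ≤ ρ := by rw [hρ_def]; linarith
  -- choose N₀
  obtain ⟨N₀, hN₀⟩ : ∃ N : ℕ, q^N * ρ < R := by
    have h1 : Tendsto (fun n : ℕ => q^n * ρ) atTop (𝓝 (0*ρ)) :=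
      (tendsto_pow_atTop_nhds_zero_of_lt_one hq0.le hq1).mul_const ρ
    rw [zero_mul] at h1
    exact (h1.eventually_lt_const hR).exists
  have hscale_lt : ∀ n, N₀ ≤ n → ∀ z ∈ K, ‖(q:ℂ)^n * z‖ < R := by
    intro n hn z hz
    rw [norm_mul, hQnorm]
    calc q^n * ‖z‖ ≤ q^n * ρ :=
          mul_le_mul_of_nonneg_left (hKnorm z hz) (pow_nonneg hq0.le n)
      _ ≤ q^N₀ * ρ :=
          mul_le_mul_of_nonneg_right (pow_le_pow_of_le_one hq0.le hq1.le hn) hρ0.le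
      _ < R := hN₀
  have hscaleΩ : ∀ (n : ℕ), ∀ z ∈ K, (q:ℂ)^n * z ∈ Ω := fun n z hz => hQΩ n z (hKΩ hz)
  set D : ℝ := ‖α‖ + 1 with hD_def
  have hD1 : 1 ≤ D := by rw [hD_def]; have := norm_nonneg α; linarith
  have hD0 : 0 < D := by linarith
  -- derivative function for y and its bound at deep scales
  have hfy : ∀ w ∈ Ω, HasDerivAt y ((fun w => α * y ((q:ℂ)*w) - y w) w) w := fun w hw => hy w hw
  have hC0 : 0 ≤ C := by
    have h1 : (q:ℂ)^N₀ * x0 ∈ Ω := hQΩ N₀ x0 hx0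
    have h2 := hC' _ h1 (by
      have := hscale_lt N₀ le_rfl x0 hx0K
      exact this)
    exact le_trans (norm_nonneg _) h2
  have hybound : ∀ n, N₀ ≤ n → ∀ z ∈ K,
      ‖α * y ((q:ℂ) * ((q:ℂ)^n * z)) - y ((q:ℂ)^n * z)‖ ≤ D * C := by
    intro n hn z hz
    have e1 : (q:ℂ) * ((q:ℂ)^n * z) = (q:ℂ)^(n+1) * z := by ring
    have h2 : ‖y ((q:ℂ)^(n+1) * z)‖ ≤ C :=
      hC' _ (hscaleΩ (n+1) z hz) (hscale_lt (n+1) (by omega) z hz)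
    have h3 : ‖y ((q:ℂ)^n * z)‖ ≤ C := hC' _ (hscaleΩ n z hz) (hscale_lt n hn z hz)
    calc ‖α * y ((q:ℂ) * ((q:ℂ)^n * z)) - y ((q:ℂ)^n * z)‖
        ≤ ‖α * y ((q:ℂ) * ((q:ℂ)^n * z))‖ + ‖y ((q:ℂ)^n * z)‖ := norm_sub_le _ _
      _ = ‖α‖ * ‖y ((q:ℂ)^(n+1) * z)‖ + ‖y ((q:ℂ)^n * z)‖ := by rw [e1, norm_mul]
      _ ≤ ‖α‖ * C + C := by
          have := mul_le_mul_of_nonneg_left h2 (norm_nonneg α)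
          linarith
      _ = D * C := by rw [hD_def]; ring
  -- the limit c of y(q^n x0)
  have hvdist : ∀ k : ℕ, dist (y ((q:ℂ)^(N₀+k) * x0)) (y ((q:ℂ)^(N₀+(k+1)) * x0))
      ≤ (q^N₀*(D*C)*L) * q^k := by
    intro k
    have h := chain_est hfy hpseg (hQΩ (N₀+k)) (B := D*C)
      (fun i hi z hz => hybound (N₀+k) (by omega) z (hsegK i hi hz)) m le_rfl
    rw [hp0, hpm, hQnorm] at h
    have hpt : (q:ℂ)^(N₀+k) * ((q:ℂ) * x0) = (q:ℂ)^(N₀+(k+1)) * x0 := by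
      rw [show N₀+(k+1) = (N₀+k)+1 by ring, pow_succ]
      ring
    rw [hpt, norm_sub_rev] at h
    rw [dist_eq_norm]
    calc ‖y ((q:ℂ)^(N₀+k) * x0) - y ((q:ℂ)^(N₀+(k+1)) * x0)‖
        ≤ q^(N₀+k) * (D*C) * L := h
      _ = (q^N₀*(D*C)*L) * q^k := by rw [pow_add]; ring
  obtain ⟨c, hc⟩ := cauchySeq_tendsto_of_complete
    (cauchySeq_of_le_geometric q (q^N₀*(D*C)*L) hq1 hvdist)
  have hyc : Tendsto (fun n : ℕ => y ((q:ℂ)^n * x0)) atTop (𝓝 c) := by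
    rw [← tendsto_add_atTop_iff_nat N₀]
    have he : (fun n : ℕ => y ((q:ℂ)^(n+N₀) * x0)) = fun k : ℕ => y ((q:ℂ)^(N₀+k) * x0) := by
      funext k; rw [Nat.add_comm]
    exact he ▸ hc
  -- the function u
  set u : ℂ → ℂ := fun z => y z - c * E z with hu_def
  have hud : ∀ w ∈ Ω, HasDerivAt u ((fun w => α * u ((q:ℂ)*w) - u w) w) w := by
    intro w hw
    have h1 := (hy w hw).sub ((hE w).const_mul c)
    have h2 : HasDerivAt u (α * y (↑q * w) - y w - c * (α * E (↑q * w) - E w)) w := h1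
    convert h2 using 1
    simp only [hu_def]
    ring
  have hQx0_tendsto : Tendsto (fun n : ℕ => (q:ℂ)^n * x0) atTop (𝓝 0) := by
    have h1 := tendsto_pow_atTop_nhds_zero_of_lt_one hq0.le hq1
    have h2 : Tendsto (fun n : ℕ => ((q^n : ℝ) : ℂ)) atTop (𝓝 ((0:ℝ):ℂ)) :=
      (Complex.continuous_ofReal.tendsto _).comp h1
    have h3 := h2.mul_const x0
    simpa using h3
  have hu0 : Tendsto (fun n : ℕ => u ((q:ℂ)^n * x0)) atTop (𝓝 0) := by
    have hE1 : Tendsto (fun n : ℕ => E ((q:ℂ)^n * x0)) atTop (𝓝 1) := by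
      have := (hEdiff.continuous.tendsto 0).comp hQx0_tendsto
      rwa [hE0] at this
    have h4 := hyc.sub (hE1.const_mul c)
    simpa using h4
  -- bound for E on the ball of radius R
  obtain ⟨ME, hME⟩ := (isCompact_closedBall (0:ℂ) R).exists_bound_of_continuousOn
    hEdiff.continuous.continuousOn
  set A₀ : ℝ := |C| + ‖c‖ * |ME| + 1 with hA₀_def
  have hA₀ : 0 < A₀ := by positivity
  have h1q : (0:ℝ) < 1 - q := by linarith
  set c₁ : ℝ := D * ((L + r) + L/(1-q)) + 1 with hc₁_def
  have hc₁le : D * ((L + r) + L/(1-q)) ≤ c₁ := by rw [hc₁_def]; linarith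
  have hc₁0 : 0 < c₁ := by
    have h1 : 0 ≤ L/(1-q) := div_nonneg hL0 h1q.le
    have h2 : 0 ≤ D * ((L + r) + L/(1-q)) := mul_nonneg hD0.le (by linarith)
    rw [hc₁_def]; linarith
  have hbase : ∀ n, N₀ ≤ n → ∀ z ∈ K, ‖u ((q:ℂ)^n * z)‖ ≤ A₀ := by
    intro n hn z hz
    have h1 : ‖y ((q:ℂ)^n * z)‖ ≤ C := hC' _ (hscaleΩ n z hz) (hscale_lt n hn z hz)
    have h2 : ‖E ((q:ℂ)^n * z)‖ ≤ ME := by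
      apply hME
      rw [mem_closedBall, dist_zero_right]
      exact (hscale_lt n hn z hz).le
    calc ‖u ((q:ℂ)^n * z)‖ ≤ ‖y ((q:ℂ)^n * z)‖ + ‖c‖ * ‖E ((q:ℂ)^n * z)‖ := by
          rw [hu_def]
          exact (norm_sub_le _ _).trans (by rw [norm_mul])
      _ ≤ |C| + ‖c‖ * |ME| :=
          add_le_add (h1.trans (le_abs_self C))
            (mul_le_mul_of_nonneg_left (h2.trans (le_abs_self ME)) (norm_nonneg c))
      _ ≤ A₀ := by rw [hA₀_def]; linarith
  -- the main induction
  have key : ∀ M : ℕ, ∀ n, N₀ ≤ n → ∀ z ∈ K, ‖u ((q:ℂ)^n * z)‖ ≤ A₀ * c₁^M * q^(M*n) := by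
    intro M
    induction M with
    | zero => intro n hn z hz; simpa using hbase n hn z hz
    | succ M ih =>
      have hpos1 : ∀ k : ℕ, (0:ℝ) ≤ A₀ * c₁^M * q^k :=
        fun k => mul_nonneg (mul_nonneg hA₀.le (pow_nonneg hc₁0.le M)) (pow_nonneg hq0.le k)
      -- derivative bound at scale k
      have hDB : ∀ k, N₀ ≤ k → ∀ w ∈ K,
          ‖α * u ((q:ℂ) * ((q:ℂ)^k * w)) - u ((q:ℂ)^k * w)‖ ≤ D * (A₀ * c₁^M * q^(M*k)) := by
        intro k hk w hw
        have e1 : (q:ℂ) * ((q:ℂ)^k * w) = (q:ℂ)^(k+1) * w := by ring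
        have h1 := ih (k+1) (by omega) w hw
        have h2 := ih k hk w hw
        have h3 : A₀ * c₁^M * q^(M*(k+1)) ≤ A₀ * c₁^M * q^(M*k) :=
          mul_le_mul_of_nonneg_left
            (pow_le_pow_of_le_one hq0.le hq1.le (Nat.mul_le_mul_left M (by omega)))
            (mul_nonneg hA₀.le (pow_nonneg hc₁0.le M))
        calc ‖α * u ((q:ℂ) * ((q:ℂ)^k * w)) - u ((q:ℂ)^k * w)‖
            ≤ ‖α * u ((q:ℂ) * ((q:ℂ)^k * w))‖ + ‖u ((q:ℂ)^k * w)‖ := norm_sub_le _ _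
          _ = ‖α‖ * ‖u ((q:ℂ)^(k+1) * w)‖ + ‖u ((q:ℂ)^k * w)‖ := by rw [e1, norm_mul]
          _ ≤ ‖α‖ * (A₀ * c₁^M * q^(M*k)) + A₀ * c₁^M * q^(M*k) := by
              have h4 := mul_le_mul_of_nonneg_left (h1.trans h3) (norm_nonneg α)
              linarith
          _ = D * (A₀ * c₁^M * q^(M*k)) := by rw [hD_def]; ring
      -- telescoping and limit: smallness at the base point
      set P : ℝ := L*D*A₀*c₁^M with hP_def
      have hP0 : 0 ≤ P := by
        rw [hP_def]
        exact mul_nonneg (mul_nonneg (mul_nonneg hL0 hD0.le) hA₀.le) (pow_nonneg hc₁0.le M)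
      set d : ℕ → ℝ := fun j => (P * q^((M+1)*N₀)) * (q^(M+1))^j with hd_def
      have hqM1 : q^(M+1) < 1 := pow_lt_one₀ hq0.le hq1 (by omega)
      have hqM0 : 0 ≤ q^(M+1) := pow_nonneg hq0.le _
      have hdist : ∀ j : ℕ, dist (u ((q:ℂ)^(N₀+j) * x0)) (u ((q:ℂ)^(N₀+(j+1)) * x0)) ≤ d j := by
        intro j
        have h := chain_est hud hpseg (hQΩ (N₀+j)) (B := D * (A₀ * c₁^M * q^(M*(N₀+j))))
          (fun i hi z hz => hDB (N₀+j) (by omega) z (hsegK i hi hz)) m le_rfl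
        rw [hp0, hpm, hQnorm] at h
        have hpt : (q:ℂ)^(N₀+j) * ((q:ℂ) * x0) = (q:ℂ)^(N₀+(j+1)) * x0 := by
          rw [show N₀+(j+1) = (N₀+j)+1 by ring, pow_succ]
          ring
        rw [hpt, norm_sub_rev] at h
        rw [dist_eq_norm]
        have hee : q^(N₀+j) * q^(M*(N₀+j)) = q^((M+1)*N₀) * (q^(M+1))^j := by
          rw [← pow_add, ← pow_mul, ← pow_add]
          congr 1
          ring
        calc ‖u ((q:ℂ)^(N₀+j) * x0) - u ((q:ℂ)^(N₀+(j+1)) * x0)‖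
            ≤ q^(N₀+j) * (D * (A₀ * c₁^M * q^(M*(N₀+j)))) * L := h
          _ = d j := by rw [hd_def, hP_def]; simp only; linear_combination (D*A₀*c₁^M*L) * hee
      have hsummd : Summable d := by
        rw [hd_def]
        exact (summable_geometric_of_lt_one hqM0 hqM1).mul_left _
      have hw0 : Tendsto (fun j : ℕ => u ((q:ℂ)^(N₀+j) * x0)) atTop (𝓝 0) := by
        have h1 := (tendsto_add_atTop_iff_nat N₀).mpr hu0
        have he : (fun n : ℕ => u ((q:ℂ)^(n+N₀) * x0)) = fun j : ℕ => u ((q:ℂ)^(N₀+j) * x0) := by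
          funext k; rw [Nat.add_comm]
        exact he ▸ h1
      have heps : ∀ n, N₀ ≤ n → ‖u ((q:ℂ)^n * x0)‖ ≤ (L*D*A₀*c₁^M/(1-q)) * q^((M+1)*n) := by
        intro n hn
        obtain ⟨j, rfl⟩ : ∃ j, n = N₀ + j := ⟨n - N₀, by omega⟩
        have h1 := dist_le_tsum_of_dist_le_of_tendsto d hdist hsummd hw0 j
        rw [dist_zero_right] at h1
        have h2 : ∑' i, d (j + i) = (P * q^((M+1)*N₀)) * ((q^(M+1))^j * (1 - q^(M+1))⁻¹) := by
          have h3 : ∀ i, d (j + i) = ((P * q^((M+1)*N₀)) * (q^(M+1))^j) * (q^(M+1))^i := by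
            intro i
            rw [hd_def]
            simp only
            rw [pow_add]
            ring
          rw [tsum_congr h3, tsum_mul_left, tsum_geometric_of_lt_one hqM0 hqM1]
          ring
        rw [h2] at h1
        have h4 : (1 - q^(M+1))⁻¹ ≤ (1-q)⁻¹ := by
          apply inv_anti₀ h1q
          have : q^(M+1) ≤ q := pow_le_of_le_one hq0.le hq1.le (by omega)
          linarith
        have h5 : q^((M+1)*N₀) * (q^(M+1))^j = q^((M+1)*(N₀+j)) := by
          rw [← pow_mul, ← pow_add]
          congr 1
          ring
        have h6 : (0:ℝ) ≤ P * q^((M+1)*(N₀+j)) :=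
          mul_nonneg hP0 (pow_nonneg hq0.le _)
        calc ‖u ((q:ℂ)^(N₀+j) * x0)‖
            ≤ (P * q^((M+1)*N₀)) * ((q^(M+1))^j * (1 - q^(M+1))⁻¹) := h1
          _ = (P * q^((M+1)*(N₀+j))) * (1 - q^(M+1))⁻¹ := by
              rw [← h5]; ring
          _ ≤ (P * q^((M+1)*(N₀+j))) * (1-q)⁻¹ :=
              mul_le_mul_of_nonneg_left h4 h6
          _ = (L*D*A₀*c₁^M/(1-q)) * q^((M+1)*(N₀+j)) := by
              rw [hP_def, div_eq_mul_inv]; ring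
      -- variation over K
      intro n hn z hz
      have hvar : ‖u ((q:ℂ)^n * z) - u ((q:ℂ)^n * x0)‖
          ≤ q^n * (D * (A₀ * c₁^M * q^(M*n))) * (L + r) := by
        have hBpos : (0:ℝ) ≤ D * (A₀ * c₁^M * q^(M*n)) := mul_nonneg hD0.le (hpos1 _)
        have hqn : (0:ℝ) ≤ q^n := pow_nonneg hq0.le n
        rcases hz with hzb | hzs
        · have h1 := seg_est hud (convex_closedBall x0 r)
            (fun w hw => hQΩ n w (hballΩ hw))
            (B := D * (A₀ * c₁^M * q^(M*n)))
            (fun w hw => hDB n hn w (hballK hw))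
            hzb (mem_closedBall_self hr.le)
          rw [hQnorm] at h1
          have h2 : ‖z - x0‖ ≤ r := mem_closedBall_iff_norm.mp hzb
          calc ‖u ((q:ℂ)^n * z) - u ((q:ℂ)^n * x0)‖
              ≤ q^n * (D * (A₀ * c₁^M * q^(M*n))) * ‖z - x0‖ := h1
            _ ≤ q^n * (D * (A₀ * c₁^M * q^(M*n))) * (L + r) := by
                apply mul_le_mul_of_nonneg_left (by linarith) (mul_nonneg hqn hBpos)
        · obtain ⟨i, hi, hzi⟩ := Set.mem_iUnion₂.mp hzs
          have him : i < m := Finset.mem_range.mp hi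
          have h1 := seg_est hud (convex_segment (p i) (p (i+1)))
            (fun w hw => hQΩ n w (hpseg i him hw))
            (B := D * (A₀ * c₁^M * q^(M*n)))
            (fun w hw => hDB n hn w (hsegK i him hw))
            hzi (left_mem_segment ℝ (p i) (p (i+1)))
          rw [hQnorm] at h1
          have h2 := chain_est hud hpseg (hQΩ n) (B := D * (A₀ * c₁^M * q^(M*n)))
            (fun i' hi' w hw => hDB n hn w (hsegK i' hi' hw)) i him.le
          rw [hp0, hQnorm] at h2
          have h3 : ‖z - p i‖ ≤ ‖p (i+1) - p i‖ := norm_sub_left_le_of_mem_segment hzi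
          have h4 : ‖p (i+1) - p i‖ + (∑ k ∈ Finset.range i, ‖p (k+1) - p k‖) ≤ L := by
            have := hsum_le (i+1) (by omega)
            rw [Finset.sum_range_succ] at this
            linarith
          have h5 := dist_triangle (u ((q:ℂ)^n * z)) (u ((q:ℂ)^n * p i)) (u ((q:ℂ)^n * x0))
          rw [dist_eq_norm, dist_eq_norm, dist_eq_norm] at h5
          calc ‖u ((q:ℂ)^n * z) - u ((q:ℂ)^n * x0)‖
              ≤ ‖u ((q:ℂ)^n * z) - u ((q:ℂ)^n * p i)‖
                + ‖u ((q:ℂ)^n * p i) - u ((q:ℂ)^n * x0)‖ := h5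
            _ ≤ q^n * (D * (A₀ * c₁^M * q^(M*n))) * ‖z - p i‖
                + q^n * (D * (A₀ * c₁^M * q^(M*n)))
                  * (∑ k ∈ Finset.range i, ‖p (k+1) - p k‖) := add_le_add h1 h2
            _ = q^n * (D * (A₀ * c₁^M * q^(M*n)))
                  * (‖z - p i‖ + ∑ k ∈ Finset.range i, ‖p (k+1) - p k‖) := by ring
            _ ≤ q^n * (D * (A₀ * c₁^M * q^(M*n))) * (L + r) := by
                have hq2 : (0:ℝ) ≤ q^n * (D * (A₀ * c₁^M * q^(M*n))) := mul_nonneg hqn hBpos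
                apply mul_le_mul_of_nonneg_left _ hq2
                linarith
      -- combine
      have h7 := heps n hn
      have h8 : ‖u ((q:ℂ)^n * z)‖ ≤ ‖u ((q:ℂ)^n * z) - u ((q:ℂ)^n * x0)‖ + ‖u ((q:ℂ)^n * x0)‖ := by
        have := norm_add_le (u ((q:ℂ)^n * z) - u ((q:ℂ)^n * x0)) (u ((q:ℂ)^n * x0))
        simpa using this
      have hee : q^n * q^(M*n) = q^((M+1)*n) := by
        rw [← pow_add]
        congr 1
        ring
      calc ‖u ((q:ℂ)^n * z)‖
          ≤ q^n * (D * (A₀ * c₁^M * q^(M*n))) * (L + r)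
            + (L*D*A₀*c₁^M/(1-q)) * q^((M+1)*n) := le_trans h8 (add_le_add hvar h7)
        _ = (D * ((L + r) + L/(1-q))) * (A₀ * c₁^M * q^((M+1)*n)) := by
            have h1qne : (1:ℝ) - q ≠ 0 := h1q.ne'
            field_simp
            linear_combination (D*A₀*c₁^M*(L+r)*(1-q)) * hee
        _ ≤ c₁ * (A₀ * c₁^M * q^((M+1)*n)) :=
            mul_le_mul_of_nonneg_right hc₁le (hpos1 _)
        _ = A₀ * c₁^(M+1) * q^((M+1)*n) := by ring
  -- conclude: u vanishes on a small ball
  obtain ⟨n₁, hn₁N, hn₁⟩ : ∃ n₁ : ℕ, N₀ ≤ n₁ ∧ c₁ * q^n₁ < 1 := by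
    have h1 : Tendsto (fun n : ℕ => c₁ * q^n) atTop (𝓝 (c₁ * 0)) :=
      (tendsto_pow_atTop_nhds_zero_of_lt_one hq0.le hq1).const_mul c₁
    rw [mul_zero] at h1
    obtain ⟨n₁, hn₁⟩ := ((h1.eventually_lt_const one_pos).and (eventually_ge_atTop N₀)).exists
    exact ⟨n₁, hn₁.2, hn₁.1⟩
  have huzero : ∀ z ∈ closedBall x0 r, u ((q:ℂ)^n₁ * z) = 0 := by
    intro z hz
    have h1 : ∀ M : ℕ, ‖u ((q:ℂ)^n₁ * z)‖ ≤ A₀ * (c₁*q^n₁)^M := by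
      intro M
      have h2 := key M n₁ hn₁N z (hballK hz)
      calc ‖u ((q:ℂ)^n₁ * z)‖ ≤ A₀ * c₁^M * q^(M*n₁) := h2
        _ = A₀ * (c₁*q^n₁)^M := by
            rw [mul_pow, ← pow_mul, Nat.mul_comm]
            ring
    have h2 : Tendsto (fun M : ℕ => A₀ * (c₁*q^n₁)^M) atTop (𝓝 (A₀ * 0)) :=
      (tendsto_pow_atTop_nhds_zero_of_lt_one
        (mul_nonneg hc₁0.le (pow_nonneg hq0.le n₁)) hn₁).const_mul A₀
    rw [mul_zero] at h2
    have h3 : ‖u ((q:ℂ)^n₁ * z)‖ ≤ 0 := ge_of_tendsto h2 (Filter.Eventually.of_forall h1)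
    exact norm_le_zero_iff.mp h3
  have hana : AnalyticOnNhd ℂ u Ω :=
    DifferentiableOn.analyticOnNhd
      (fun w hw => (hud w hw).differentiableAt.differentiableWithinAt) hΩopen
  have hz₀ : (q:ℂ)^n₁ * x0 ∈ Ω := hQΩ n₁ x0 hx0
  have hqc0 : ((q:ℂ))^n₁ ≠ 0 := pow_ne_zero _ (by exact_mod_cast hq0.ne')
  have hev : u =ᶠ[𝓝 ((q:ℂ)^n₁ * x0)] 0 := by
    have hmem : ball ((q:ℂ)^n₁ * x0) (q^n₁ * r) ∈ 𝓝 ((q:ℂ)^n₁ * x0) :=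
      ball_mem_nhds _ (by positivity)
    filter_upwards [hmem] with w hw
    have hzdef : w = (q:ℂ)^n₁ * (w / (q:ℂ)^n₁) := by field_simp
    have hzball : w / (q:ℂ)^n₁ ∈ closedBall x0 r := by
      rw [mem_closedBall, dist_eq_norm]
      rw [mem_ball, dist_eq_norm] at hw
      have he2 : w / (q:ℂ)^n₁ - x0 = (w - (q:ℂ)^n₁ * x0) / (q:ℂ)^n₁ := by
        field_simp
      rw [he2, norm_div, hQnorm]
      rw [div_le_iff₀ (by positivity)]
      calc ‖w - (q:ℂ)^n₁ * x0‖ ≤ q^n₁ * r := hw.le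
        _ = r * q^n₁ := by ring
    calc u w = u ((q:ℂ)^n₁ * (w / (q:ℂ)^n₁)) := by rw [← hzdef]
      _ = 0 := huzero _ hzball
  have heq := hana.eqOn_zero_of_preconnected_of_eventuallyEq_zero
    hΩconn.isPreconnected hz₀ hev
  refine ⟨fun z => c * E z, hEdiff.const_mul c, ?_⟩
  intro x hx
  have h1 : u x = 0 := heq hx
  have h2 : y x - c * E x = 0 := h1
  exact (sub_eq_zero.mp h2).symm
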